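/- With the notation of the previous item, for all a, b ∈ A one has ⟨U(a), q(b)⟩ = a*·L(b). Consequently ‖L(b)‖ ≤ ‖q(b)‖_{M_L} for all b ∈ A, so there is a well-defined bounded linear map T : M_L → A with T(q(b)) = L(b), and U is adjointable with adjoint T. -/

import Mathlib

/-- For an Exel system `(A, α, L)` with `A` unital, and `M_L` the Hilbert module
(abstracted as a normed space `M` with `A`-valued inner product, dense canonical map
`q : A → M` with `⟪q a, q b⟫ = L (a* b)` and `‖q a‖² = ‖L (a* a)‖`), the map
`U : a ↦ q (α a)` satisfies `⟪U a, q b⟫ = a* · L b`; consequently `‖L b‖ ≤ ‖q b‖`,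
there is a bounded linear `T : M → A` with `T (q b) = L b`, and `U` is adjointable
with adjoint `T` (i.e. `⟪U a, m⟫ = a* · T m` for all `a, m`). -/
theorem stmt2 {A : Type*} [CStarAlgebra A] {M : Type*}
    [NormedAddCommGroup M] [NormedSpace ℂ M]
    (inner : M → M → A) (q : A →ₗ[ℂ] M)
    (α : A →⋆ₐ[ℂ] A) (L : A →ₗ[ℂ] A)
    (hLpos : ∀ a : A, (∃ x, a = star x * x) → ∃ y, L a = star y * y)
    (htransfer : ∀ a b : A, L (α a * b) = a * L b)
    (hL1 : L 1 = 1)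
    (hinner : ∀ a b : A, inner (q a) (q b) = L (star a * b))
    (hnorm : ∀ a : A, ‖q a‖ ^ 2 = ‖L (star a * a)‖)
    (hdense : DenseRange q)
    (hinner_cont : ∀ a : A, Continuous fun m : M => inner (q a) m) :
    (∀ a b : A, inner (q (α a)) (q b) = star a * L b) ∧
    (∀ b : A, ‖L b‖ ≤ ‖q b‖) ∧
    (∃ T : M →L[ℂ] A, (∀ b : A, T (q b) = L b) ∧
      ∀ (a : A) (m : M), inner (q (α a)) m = star a * T m) := by
  letI := CStarAlgebra.spectralOrder A
  haveI := CStarAlgebra.spectralOrderedRing A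
  -- L preserves positivity
  have hLnn : ∀ a : A, 0 ≤ a → 0 ≤ L a := by
    intro a ha
    obtain ⟨y, hy⟩ := hLpos a ⟨CFC.sqrt a, by
      rw [(IsSelfAdjoint.of_nonneg (CFC.sqrt_nonneg a)).star_eq]
      exact (CFC.sqrt_mul_sqrt_self a ha).symm⟩
    exact hy ▸ star_mul_self_nonneg y
  -- L is star-preserving
  have hLsa : ∀ a : A, IsSelfAdjoint a → IsSelfAdjoint (L a) := by
    intro a ha
    rw [← CFC.posPart_sub_negPart a ha, map_sub]
    exact ((hLnn _ (CFC.posPart_nonneg a)).isSelfAdjoint).sub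
      ((hLnn _ (CFC.negPart_nonneg a)).isSelfAdjoint)
  have hLstar : ∀ a : A, L (star a) = star (L a) := by
    intro a
    have hstar : star a = (realPart a : A) - Complex.I • (imaginaryPart a : A) := by
      nth_rewrite 1 [← realPart_add_I_smul_imaginaryPart a]
      rw [star_add, star_smul, (realPart a).property.star_eq,
        (imaginaryPart a).property.star_eq,
        Complex.star_def, Complex.conj_I, neg_smul, sub_eq_add_neg]
    have hre : star (L (realPart a : A)) = L (realPart a : A) :=
      (hLsa _ (realPart a).property).star_eq
    have him : star (L (imaginaryPart a : A)) = L (imaginaryPart a : A) :=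
      (hLsa _ (imaginaryPart a).property).star_eq
    nth_rewrite 2 [← realPart_add_I_smul_imaginaryPart a]
    rw [hstar, map_sub, map_smul, map_add, map_smul, star_add, star_smul, hre, him,
      Complex.star_def, Complex.conj_I, neg_smul, sub_eq_add_neg]
  -- part 1
  have h1 : ∀ a b : A, inner (q (α a)) (q b) = star a * L b := by
    intro a b
    rw [hinner, ← map_star, htransfer]
  -- part 2
  have h2 : ∀ b : A, ‖L b‖ ≤ ‖q b‖ := by
    intro b
    set c := L b with hc
    have e1 : L (star (α c) * b) = star c * c := by
      rw [← map_star, htransfer, ← hc]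
    have e2 : L (star b * α c) = star c * c := by
      have h := hLstar (star (α c) * b)
      rw [star_mul, star_star] at h
      rw [h, e1]
      exact (IsSelfAdjoint.star_mul_self c).star_eq
    have e3 : L (star (α c) * α c) = star c * c := by
      have heq : star (α c) * α c = α (star c * c) * 1 := by
        rw [mul_one, map_mul, map_star]
      rw [heq, htransfer, hL1, mul_one]
    have expand : star (b - α c) * (b - α c)
        = star b * b - star b * α c - star (α c) * b + star (α c) * α c := by
      rw [star_sub]; noncomm_ring
    obtain ⟨y, hy⟩ := hLpos _ ⟨b - α c, rfl⟩
    have hexp : L (star (b - α c) * (b - α c)) = L (star b * b) - star c * c := by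
      rw [expand, map_add, map_sub, map_sub, e1, e2, e3]
      abel
    have hle : star c * c ≤ L (star b * b) := by
      have h0 : 0 ≤ L (star b * b) - star c * c := by
        rw [← hexp, hy]; exact star_mul_self_nonneg y
      exact sub_nonneg.mp h0
    have hnle : ‖star c * c‖ ≤ ‖L (star b * b)‖ :=
      CStarAlgebra.norm_le_norm_of_nonneg_of_le (star_mul_self_nonneg c) hle
    have hsq : ‖c‖ ^ 2 ≤ ‖q b‖ ^ 2 := by
      rw [hnorm b]
      calc ‖c‖ ^ 2 = ‖star c * c‖ := by rw [CStarRing.norm_star_mul_self, sq]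
        _ ≤ _ := hnle
    nlinarith [norm_nonneg (q b), norm_nonneg c]
  -- construction of T
  have hker : ∀ x ∈ LinearMap.ker q, x ∈ LinearMap.ker L := by
    intro x hx
    rw [LinearMap.mem_ker] at hx ⊢
    have hb := h2 x
    rw [hx, norm_zero] at hb
    exact norm_le_zero_iff.mp hb
  let T₀ : (LinearMap.range q) →ₗ[ℂ] A :=
    ((LinearMap.ker q).liftQ L hker) ∘ₗ (LinearMap.quotKerEquivRange q).symm.toLinearMap
  have hT₀ : ∀ b : A, T₀ ⟨q b, LinearMap.mem_range_self q b⟩ = L b := by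
    intro b
    show ((LinearMap.ker q).liftQ L hker)
      ((LinearMap.quotKerEquivRange q).symm ⟨q b, LinearMap.mem_range_self q b⟩) = L b
    rw [LinearMap.quotKerEquivRange_symm_apply_image]
    simp
  have hT₀bound : ∀ x : LinearMap.range q, ‖T₀ x‖ ≤ 1 * ‖x‖ := by
    rintro ⟨x, hx⟩
    obtain ⟨b, rfl⟩ := hx
    rw [hT₀ b, one_mul]
    exact h2 b
  let T₀' : (LinearMap.range q) →L[ℂ] A := T₀.mkContinuous 1 hT₀bound
  let e : (LinearMap.range q) →L[ℂ] M := (LinearMap.range q).subtypeL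
  have hd : DenseRange e := by
    have hr : Set.range e = Set.range q := by
      ext m
      constructor
      · rintro ⟨⟨x, hx⟩, rfl⟩; exact hx
      · rintro ⟨b, rfl⟩; exact ⟨⟨q b, LinearMap.mem_range_self q b⟩, rfl⟩
    unfold DenseRange
    rw [hr]
    exact hdense
  have he : IsUniformInducing e := isUniformEmbedding_subtype_val.isUniformInducing
  let T : M →L[ℂ] A := T₀'.extend e
  have hTq : ∀ b : A, T (q b) = L b := by
    intro b
    have h := ContinuousLinearMap.extend_eq T₀' hd he ⟨q b, LinearMap.mem_range_self q b⟩
    have he' : e ⟨q b, LinearMap.mem_range_self q b⟩ = q b := rfl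
    rw [he'] at h
    calc T (q b) = T₀' ⟨q b, LinearMap.mem_range_self q b⟩ := h
      _ = T₀ ⟨q b, LinearMap.mem_range_self q b⟩ := rfl
      _ = L b := hT₀ b
  refine ⟨h1, h2, T, hTq, ?_⟩
  intro a
  have hc1 : Continuous fun m : M => inner (q (α a)) m := hinner_cont (α a)
  have hc2 : Continuous fun m : M => star a * T m := continuous_const.mul T.continuous
  have heq := hdense.equalizer hc1 hc2 (funext fun b => by
    simp only [Function.comp_apply]
    rw [h1 a b, hTq b])
  intro m
  exact congrFun heq m
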